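/- For the function f(s) = −1/s − s·log s + ((1+s)³/s²)·log(1+s), one has 3·f(ν) − 15/2 > 0 for every ν > 0. -/

import Mathlib

open Real

private noncomputable def Hfun (s : ℝ) : ℝ :=
  (1 + s) ^ 3 * Real.log (1 + s) - s ^ 3 * Real.log s - s - (5 / 2) * s ^ 2

private noncomputable def Gfun (s : ℝ) : ℝ :=
  3 * (1 + s) ^ 2 * Real.log (1 + s) + (1 + s) ^ 2 - 3 * s ^ 2 * Real.log s - s ^ 2 - 1 - 5 * s

private lemma lemA {s : ℝ} (hs : 0 < s) : s * Real.log s < (1 + s) * Real.log (1 + s) := by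
  rcases lt_or_ge s 1 with h | h
  · have h1 : s * Real.log s < 0 := by
      have := Real.log_neg hs h
      nlinarith
    have h2 : 0 < (1 + s) * Real.log (1 + s) := by
      have : 0 < Real.log (1 + s) := Real.log_pos (by linarith)
      nlinarith
    linarith
  · have hls : 0 ≤ Real.log s := Real.log_nonneg h
    have hlt : Real.log s < Real.log (1 + s) := Real.log_lt_log hs (by linarith)
    have h2 : 0 < Real.log (1 + s) := lt_of_le_of_lt hls hlt
    nlinarith

private lemma contH : ContinuousOn Hfun (Set.Ici 0) := by
  have h1 : Continuous fun s : ℝ => s ^ 3 * Real.log s := by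
    have : (fun s : ℝ => s ^ 3 * Real.log s) = fun s => s ^ 2 * (s * Real.log s) := by
      funext s; ring
    rw [this]
    exact (continuous_pow 2).mul Real.continuous_mul_log
  have h2 : ContinuousOn (fun s : ℝ => (1 + s) ^ 3 * Real.log (1 + s)) (Set.Ici 0) := by
    apply ContinuousOn.mul (by fun_prop)
    exact ContinuousOn.log (by fun_prop) (fun x hx => by simp at hx; intro h; linarith)
  exact (h2.sub h1.continuousOn).sub (by fun_prop) |>.sub (by fun_prop)

private lemma contG : ContinuousOn Gfun (Set.Ici 0) := by
  have h1 : Continuous fun s : ℝ => 3 * s ^ 2 * Real.log s := by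
    have : (fun s : ℝ => 3 * s ^ 2 * Real.log s) = fun s => 3 * s * (s * Real.log s) := by
      funext s; ring
    rw [this]
    exact (by fun_prop : Continuous fun s : ℝ => 3 * s).mul Real.continuous_mul_log
  have h2 : ContinuousOn (fun s : ℝ => 3 * (1 + s) ^ 2 * Real.log (1 + s)) (Set.Ici 0) := by
    apply ContinuousOn.mul (by fun_prop)
    exact ContinuousOn.log (by fun_prop) (fun x hx => by simp at hx; intro h; linarith)
  exact ((((h2.add (by fun_prop)).sub h1.continuousOn).sub (by fun_prop)).sub (by fun_prop)).sub
    (by fun_prop)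

private lemma derivG {s : ℝ} (hs : 0 < s) :
    HasDerivAt Gfun (6 * ((1 + s) * Real.log (1 + s) - s * Real.log s)) s := by
  have hs1 : (1 : ℝ) + s ≠ 0 := by linarith
  have hlog1 : HasDerivAt (fun x : ℝ => Real.log (1 + x)) (1 / (1 + s)) s := by
    have h0 : HasDerivAt (fun x : ℝ => 1 + x) 1 s := by
      simpa using (hasDerivAt_const s (1:ℝ)).fun_add (hasDerivAt_id s)
    have := (Real.hasDerivAt_log hs1).comp s h0
    simpa [Function.comp_def] using this
  have hlog : HasDerivAt Real.log (1 / s) s := by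
    simpa using Real.hasDerivAt_log hs.ne'
  have hp1 : HasDerivAt (fun x : ℝ => 3 * (1 + x) ^ 2) (6 * (1 + s)) s := by
    have h0 : HasDerivAt (fun x : ℝ => 1 + x) 1 s := by
      simpa using (hasDerivAt_const s (1:ℝ)).fun_add (hasDerivAt_id s)
    have := (h0.fun_pow 2).const_mul (3:ℝ)
    exact this.congr_deriv (by norm_num <;> ring)
  have hp2 : HasDerivAt (fun x : ℝ => 3 * x ^ 2) (6 * s) s := by
    have := ((hasDerivAt_id s).fun_pow 2).const_mul (3 : ℝ)
    exact this.congr_deriv (by norm_num <;> ring)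
  have h1 := hp1.fun_mul hlog1
  have h2 := hp2.fun_mul hlog
  have hq : HasDerivAt (fun x : ℝ => (1 + x) ^ 2) (2 * (1 + s)) s := by
    have h0 : HasDerivAt (fun x : ℝ => 1 + x) 1 s := by
      simpa using (hasDerivAt_const s (1:ℝ)).fun_add (hasDerivAt_id s)
    simpa using h0.fun_pow 2
  have hq2 : HasDerivAt (fun x : ℝ => x ^ 2) (2 * s) s := by
    simpa using (hasDerivAt_id s).fun_pow 2
  have h := ((((h1.fun_add hq).fun_sub h2).fun_sub hq2).fun_sub (hasDerivAt_const s (1:ℝ))).fun_sub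
    ((hasDerivAt_id s).const_mul 5)
  refine h.congr_deriv ?_
  field_simp
  ring

private lemma derivH {s : ℝ} (hs : 0 < s) : HasDerivAt Hfun (Gfun s) s := by
  have hs1 : (1 : ℝ) + s ≠ 0 := by linarith
  have hlog1 : HasDerivAt (fun x : ℝ => Real.log (1 + x)) (1 / (1 + s)) s := by
    have h0 : HasDerivAt (fun x : ℝ => 1 + x) 1 s := by
      simpa using (hasDerivAt_const s (1:ℝ)).fun_add (hasDerivAt_id s)
    have := (Real.hasDerivAt_log hs1).comp s h0
    simpa [Function.comp_def] using this
  have hlog : HasDerivAt Real.log (1 / s) s := by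
    simpa using Real.hasDerivAt_log hs.ne'
  have hp1 : HasDerivAt (fun x : ℝ => (1 + x) ^ 3) (3 * (1 + s) ^ 2) s := by
    have h0 : HasDerivAt (fun x : ℝ => 1 + x) 1 s := by
      simpa using (hasDerivAt_const s (1:ℝ)).fun_add (hasDerivAt_id s)
    simpa using h0.fun_pow 3
  have hp2 : HasDerivAt (fun x : ℝ => x ^ 3) (3 * s ^ 2) s := by
    simpa using (hasDerivAt_id s).fun_pow 3
  have h1 := hp1.fun_mul hlog1
  have h2 := hp2.fun_mul hlog
  have hq : HasDerivAt (fun x : ℝ => (5 / 2 : ℝ) * x ^ 2) (5 * s) s := by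
    have := ((hasDerivAt_id s).fun_pow 2).const_mul (5/2 : ℝ)
    exact this.congr_deriv (by norm_num <;> ring)
  have h := ((h1.fun_sub h2).fun_sub (hasDerivAt_id s)).fun_sub hq
  refine h.congr_deriv ?_
  unfold Gfun
  field_simp
  ring

private lemma Gpos {s : ℝ} (hs : 0 < s) : 0 < Gfun s := by
  have hmono : StrictMonoOn Gfun (Set.Ici 0) := by
    apply strictMonoOn_of_deriv_pos (convex_Ici 0) contG
    intro x hx
    rw [interior_Ici] at hx
    rw [(derivG hx).deriv]
    have := lemA hx
    linarith
  have h0 : Gfun 0 = 0 := by simp [Gfun]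
  have := hmono (Set.self_mem_Ici) (Set.mem_Ici.mpr hs.le) hs
  rwa [h0] at this

private lemma Hpos {s : ℝ} (hs : 0 < s) : 0 < Hfun s := by
  have hmono : StrictMonoOn Hfun (Set.Ici 0) := by
    apply strictMonoOn_of_deriv_pos (convex_Ici 0) contH
    intro x hx
    rw [interior_Ici] at hx
    rw [(derivH hx).deriv]
    exact Gpos hx
  have h0 : Hfun 0 = 0 := by simp [Hfun]
  have := hmono (Set.self_mem_Ici) (Set.mem_Ici.mpr hs.le) hs
  rwa [h0] at this

/-- Positivity of the zero-momentum Yang–Mills part of the renormalized one-loop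
gluon vacuum polarization: `3·f(ν) − 15/2 > 0` for every `ν > 0`, where
`f(s) = −1/s − s·log s + ((1+s)³/s²)·log(1+s)`. -/
theorem gluon_vacuum_positivity (ν : ℝ) (hν : 0 < ν) :
    0 < 3 * (-1 / ν - ν * Real.log ν + ((1 + ν) ^ 3 / ν ^ 2) * Real.log (1 + ν)) - 15 / 2 := by
  have hH := Hpos hν
  unfold Hfun at hH
  have hν2 : (0:ℝ) < ν ^ 2 := by positivity
  have key : 3 * (-1 / ν - ν * Real.log ν + ((1 + ν) ^ 3 / ν ^ 2) * Real.log (1 + ν)) - 15 / 2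
      = 3 * ((1 + ν) ^ 3 * Real.log (1 + ν) - ν ^ 3 * Real.log ν - ν - (5 / 2) * ν ^ 2) / ν ^ 2 := by
    field_simp
    ring
  rw [key]
  positivity
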